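/- For 0 < c₀ ≤ 1, with β(t) and K₀ as above and x(t) = t + (1/π) arccot(K₀ tanh(β(t))), one has x′(t) > 0 if |sinh(β(t))| > √((c₀−c₀²)/2) and x′(t) < 0 if |sinh(β(t))| < √((c₀−c₀²)/2). -/

import Mathlib

open Real

noncomputable def arccot (y : ℝ) : ℝ := π / 2 - Real.arctan y

lemma myHasDerivAt_tanh (x : ℝ) : HasDerivAt Real.tanh (1 / Real.cosh x ^ 2) x := by
  have hc := (Real.cosh_pos x).ne'
  have h := (Real.hasDerivAt_sinh x).div (Real.hasDerivAt_cosh x) hc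
  have hfun : Real.tanh = fun y => Real.sinh y / Real.cosh y := by
    funext y; exact Real.tanh_eq_sinh_div_cosh y
  rw [hfun]
  refine HasDerivAt.congr_deriv h ?_
  have h2 := Real.cosh_sq_sub_sinh_sq x
  congr 1
  nlinarith [h2]

theorem x_deriv_sign_tanh_branch (c₀ k : ℝ) (hc₀ : 0 < c₀) (hc₀' : c₀ ≤ 1)
    (K₀ : ℝ) (hK₀ : K₀ = Real.sqrt ((2 - c₀) / c₀))
    (β : ℝ → ℝ) (hβ : ∀ t, β t = (c₀ * K₀ / 2) * (2 * π * t + k))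
    (x : ℝ → ℝ)
    (hx : ∀ t, x t = t + (1 / π) * arccot (K₀ * Real.tanh (β t))) :
    ∀ t : ℝ,
      (|Real.sinh (β t)| > Real.sqrt ((c₀ - c₀ ^ 2) / 2) → deriv x t > 0) ∧
      (|Real.sinh (β t)| < Real.sqrt ((c₀ - c₀ ^ 2) / 2) → deriv x t < 0) := by
  intro t
  have hπ : (0:ℝ) < π := Real.pi_pos
  have hK₀sq : K₀ ^ 2 = (2 - c₀) / c₀ := by
    rw [hK₀, Real.sq_sqrt]
    apply div_nonneg (by linarith) hc₀.le
  set A := c₀ * K₀ / 2 with hA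
  have hxf : x = fun t => t + (1/π) * (π/2 - Real.arctan (K₀ * Real.tanh (A * (2*π*t+k)))) := by
    funext s; rw [hx, hβ]; rfl
  set u := A * (2*π*t+k) with hu
  have h1 : HasDerivAt (fun t : ℝ => A * (2*π*t+k)) (A * (2*π)) t := by
    have := (((hasDerivAt_id t).const_mul (2*π)).add_const k).const_mul A
    simpa using this
  have h2 := (myHasDerivAt_tanh u).comp t h1
  have h3 := h2.const_mul K₀
  have h4 := (Real.hasDerivAt_arctan (K₀ * Real.tanh u)).comp t h3
  have h5 := ((h4.const_sub (π/2)).const_mul (1/π)).const_add t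
  have h6 : HasDerivAt x
      (1 + 1/π * -(1 / (1 + (K₀ * Real.tanh u)^2) * (K₀ * (1 / Real.cosh u ^ 2 * (A * (2*π)))))) t := by
    rw [hxf]
    have := (hasDerivAt_id' t).add ((h4.const_sub (π/2)).const_mul (1/π))
    simpa [Pi.add_def] using this
  have hD := h6.deriv
  have htanh : Real.tanh u = Real.sinh u / Real.cosh u := Real.tanh_eq_sinh_div_cosh u
  rw [htanh] at hD
  have hK2 : c₀ * K₀ ^ 2 = 2 - c₀ := by
    rw [hK₀sq]; field_simp
  have hsb : Real.sinh (β t) = Real.sinh u := by rw [hβ]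
  rw [hsb]
  obtain ⟨s, C, hsu, hC, hCpos, hC2⟩ :
      ∃ s C, Real.sinh u = s ∧ Real.cosh u = C ∧ 0 < C ∧ C ^ 2 = 1 + s ^ 2 := by
    refine ⟨_, _, rfl, rfl, Real.cosh_pos u, ?_⟩
    have := Real.cosh_sq_sub_sinh_sq u; nlinarith
  rw [hsu, hC] at hD
  rw [hsu]
  have hval : deriv x t = (2 * s ^ 2 - (c₀ - c₀^2)) / (c₀ + 2 * s ^ 2) := by
    rw [hD, hA]
    have hden : (0:ℝ) < c₀ + 2 * s ^ 2 := by positivity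
    have hden2 : (0:ℝ) < 1 + (K₀ * (s / C))^2 := by positivity
    field_simp
    linear_combination (-c₀ - c₀*s^2) * hK2 + (c₀*(2-c₀)) * hC2
  have hdenpos : (0:ℝ) < c₀ + 2 * s ^ 2 := by positivity
  have hr : (0:ℝ) ≤ (c₀ - c₀^2) / 2 := by nlinarith
  constructor
  · intro h
    have hs2 : (c₀ - c₀^2) / 2 < s ^ 2 := by
      have := (Real.sqrt_lt' (lt_of_le_of_lt (Real.sqrt_nonneg _) h)).mp h
      calc (c₀ - c₀^2)/2 < |s|^2 := this
        _ = s ^ 2 := sq_abs s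
    rw [hval]
    apply div_pos (by linarith) hdenpos
  · intro h
    have hs2 : s ^ 2 < (c₀ - c₀^2) / 2 := by
      have := (Real.lt_sqrt (abs_nonneg s)).mp h
      calc s ^ 2 = |s|^2 := (sq_abs s).symm
        _ < (c₀ - c₀^2)/2 := this
    rw [hval]
    apply div_neg_of_neg_of_pos (by linarith) hdenpos
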